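/- Let S and T be dependent 3-cutsets of G with S ∩ T = ∅. Then there exist vertices u ∈ T \ S and v ∈ S \ T with the following properties, where C denotes the connected component of G − S containing u and D denotes the connected component of G − T containing v: C ∩ D = ∅, T ∩ C = {u}, S ∩ D = {v}; the vertices u and v are adjacent; v is the only vertex of D ∪ T adjacent to u; and u is the only vertex of C ∪ S adjacent to v. -/

import Mathlib

namespace Paper

variable {V : Type*}

/-- `S ⊆ V(G)` is a cutset of `G`: the graph `G − S` is disconnected. -/
def IsCutset (G : SimpleGraph V) (S : Set V) : Prop :=
  ¬ (G.induce (Sᶜ : Set V)).Connected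

/-- A 3-cutset: a cutset of exactly 3 vertices. -/
def IsThreeCutset (G : SimpleGraph V) (S : Set V) : Prop :=
  S.ncard = 3 ∧ IsCutset G S

/-- `G` is triconnected: at least 4 vertices and deleting any at most 2 vertices
leaves a connected graph. -/
def IsTriconnected [Fintype V] (G : SimpleGraph V) : Prop :=
  4 ≤ Fintype.card V ∧
    ∀ X : Set V, X.ncard ≤ 2 → (G.induce (Xᶜ : Set V)).Connected

/-- `x` and `y` both survive the deletion of `R` and lie in the same connected
component of `G − R`. -/
def ReachOutside (G : SimpleGraph V) (R : Set V) (x y : V) : Prop :=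
  ∃ (hx : x ∈ (Rᶜ : Set V)) (hy : y ∈ (Rᶜ : Set V)),
    (G.induce (Rᶜ : Set V)).Reachable ⟨x, hx⟩ ⟨y, hy⟩

/-- `R` splits `X`: two vertices of `X \ R` lie in different connected components
of `G − R`. -/
def Splits (G : SimpleGraph V) (R X : Set V) : Prop :=
  ∃ x ∈ X, ∃ y ∈ X, x ∉ R ∧ y ∉ R ∧ ¬ ReachOutside G R x y

/-- Two 3-cutsets are dependent iff one splits the other. -/
def Dependent (G : SimpleGraph V) (S T : Set V) : Prop :=
  Splits G S T ∨ Splits G T S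

/-- The connected component of `G − R` containing `u` (empty if `u ∈ R`). -/
def compOutside (G : SimpleGraph V) (R : Set V) (u : V) : Set V :=
  {y | ReachOutside G R u y}

/-- `C` is a connected component of `G − R`. -/
def IsCompOutside (G : SimpleGraph V) (R : Set V) (C : Set V) : Prop :=
  ∃ u, u ∉ R ∧ C = compOutside G R u

section Helpers

variable (G : SimpleGraph V)

lemma reach_refl {R : Set V} {x : V} (hx : x ∉ R) : ReachOutside G R x x :=
  ⟨hx, hx, SimpleGraph.Reachable.refl _⟩

lemma reach_symm {R : Set V} {x y : V} (h : ReachOutside G R x y) : ReachOutside G R y x := by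
  obtain ⟨hx, hy, hr⟩ := h; exact ⟨hy, hx, hr.symm⟩

lemma reach_trans {R : Set V} {x y z : V} (h1 : ReachOutside G R x y)
    (h2 : ReachOutside G R y z) : ReachOutside G R x z := by
  obtain ⟨hx, hy, hr⟩ := h1; obtain ⟨hy', hz, hr'⟩ := h2
  exact ⟨hx, hz, hr.trans hr'⟩

lemma reach_right_not {R : Set V} {x y : V} (h : ReachOutside G R x y) : y ∉ R := by
  obtain ⟨_, hy, _⟩ := h; exact hy

lemma reach_left_not {R : Set V} {x y : V} (h : ReachOutside G R x y) : x ∉ R := by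
  obtain ⟨hx, _, _⟩ := h; exact hx

lemma reach_adj {R : Set V} {x y : V} (hx : x ∉ R) (hy : y ∉ R) (h : G.Adj x y) :
    ReachOutside G R x y :=
  ⟨hx, hy, SimpleGraph.Adj.reachable (show (G.induce (Rᶜ : Set V)).Adj ⟨x, hx⟩ ⟨y, hy⟩ from h)⟩

lemma reach_extend {R : Set V} {a x y : V} (h : ReachOutside G R a x) (hxy : G.Adj x y)
    (hy : y ∉ R) : ReachOutside G R a y :=
  reach_trans G h (reach_adj G (reach_right_not G h) hy hxy)

lemma walk_closure {R : Set V} (P : V → Prop) {d z : V}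
    (hd : P d) (step : ∀ x y, P x → G.Adj x y → y ∉ R → P y)
    (h : ReachOutside G R d z) : P z := by
  obtain ⟨hd', hz', hr⟩ := h
  obtain ⟨p⟩ := hr
  suffices H : ∀ (a b : (Rᶜ : Set V)), (G.induce (Rᶜ : Set V)).Walk a b → P ↑a → P ↑b from
    H _ _ p hd
  intro a b p
  induction p with
  | nil => exact id
  | @cons u v w h q ih => exact fun hu => ih (step ↑u ↑v hu h v.2)

lemma cutset_pair {T : Set V} (hT : IsCutset G T) (hne : (Tᶜ : Set V).Nonempty) :
    ∃ x ∉ T, ∃ y ∉ T, ¬ ReachOutside G T x y := by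
  by_contra h
  push_neg at h
  apply hT
  rw [SimpleGraph.connected_iff]
  refine ⟨fun a b => ?_, ⟨⟨hne.choose, hne.choose_spec⟩⟩⟩
  obtain ⟨ha, hb, hr⟩ := h a a.2 b b.2
  exact hr

lemma pigeon3 {r : V → V → Prop} (hsym : ∀ {x y}, r x y → r y x)
    (htrans : ∀ {x y z}, r x y → r y z → r x z)
    {a b c : V}
    (hra : r a a) (hrb : r b b) (hrc : r c c)
    {x y : V} (hx : x ∈ ({a, b, c} : Set V)) (hy : y ∈ ({a, b, c} : Set V))
    (hxy : ¬ r x y) :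
    ∃ v ∈ ({a, b, c} : Set V), ∀ s ∈ ({a, b, c} : Set V), r v s → s = v := by
  simp only [Set.mem_insert_iff, Set.mem_singleton_iff] at hx hy
  by_cases h1 : r a b
  · by_cases h2 : r a c
    · exfalso
      have h3 : r b c := htrans (hsym h1) h2
      rcases hx with rfl | rfl | rfl <;> rcases hy with rfl | rfl | rfl <;>
        first
          | exact hxy hra | exact hxy hrb | exact hxy hrc
          | exact hxy h1 | exact hxy h2 | exact hxy h3
          | exact hxy (hsym h1) | exact hxy (hsym h2) | exact hxy (hsym h3)
    · -- v = c
      refine ⟨c, by simp, ?_⟩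
      intro s hs hcs
      rcases hs with rfl | rfl | rfl
      · exact absurd (hsym hcs) h2
      · exact absurd (htrans h1 (hsym hcs)) h2
      · rfl
  · by_cases h2 : r a c
    · -- v = b
      refine ⟨b, by simp, ?_⟩
      intro s hs hbs
      rcases hs with rfl | rfl | rfl
      · exact absurd (hsym hbs) h1
      · rfl
      · exact absurd (htrans hbs (hsym h2)) (fun h => h1 (hsym h))
    · -- v = a
      refine ⟨a, by simp, ?_⟩
      intro s hs has
      rcases hs with rfl | rfl | rfl
      · rfl
      · exact absurd has h1
      · exact absurd has h2


/-- Separation lemma: a nonempty set `Z` whose neighbourhood outside itself is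
contained in a set `X` of at most 2 vertices, with something outside `Z ∪ X`,
contradicts triconnectivity. -/
lemma sep [Fintype V] (htri : IsTriconnected G)
    {Z X : Set V} (hcard : X.ncard ≤ 2)
    (hZX : ∀ z ∈ Z, z ∉ X)
    (hclose : ∀ z ∈ Z, ∀ y, G.Adj z y → y ∈ Z ∪ X)
    {z w : V} (hz : z ∈ Z) (hw : w ∉ Z) (hwX : w ∉ X) : False := by
  have hconn := htri.2 X hcard
  have hreach : ReachOutside G X z w :=
    ⟨hZX z hz, hwX, hconn.preconnected _ _⟩
  exact hw (walk_closure G (· ∈ Z) hz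
    (fun x y hx hxy hyX => (hclose x hx y hxy).resolve_right hyX) hreach)

lemma key [Fintype V] (htri : IsTriconnected G)
    {S T : Set V} (hS : IsThreeCutset G S) (hT : IsThreeCutset G T)
    (hsplit : Splits G S T) (hST : S ∩ T = ∅) :
    ∃ u ∈ T \ S, ∃ v ∈ S \ T,
      compOutside G S u ∩ compOutside G T v = ∅ ∧
      T ∩ compOutside G S u = {u} ∧
      S ∩ compOutside G T v = {v} ∧
      G.Adj u v ∧
      (∀ w ∈ compOutside G T v ∪ T, G.Adj u w → w = v) ∧
      (∀ w ∈ compOutside G S u ∪ S, G.Adj v w → w = u) := by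
  classical
  have hdisj : ∀ x, x ∈ S → x ∉ T := by
    intro x hxS hxT
    exact absurd (Set.mem_inter hxS hxT) (by rw [hST]; exact id)
  have hdisj' : ∀ x, x ∈ T → x ∉ S := fun x hxT hxS => hdisj x hxS hxT
  -- the splitting pair
  obtain ⟨t1, ht1T, t2, ht2T, ht1S, ht2S, ht12⟩ := hsplit
  -- Step A: u ∈ T with singleton trace in its component of G − S
  obtain ⟨p, q, r', hpq, hpr, hqr, hTeq⟩ := Set.ncard_eq_three.mp hT.1
  have hu : ∃ u ∈ T, ∀ t ∈ T, ReachOutside G S u t → t = u := by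
    rw [hTeq] at ht1T ht2T ⊢
    have hp : p ∈ T := by rw [hTeq]; simp
    have hq : q ∈ T := by rw [hTeq]; simp
    have hr : r' ∈ T := by rw [hTeq]; simp
    exact @pigeon3 V (ReachOutside G S) (fun {x y} => reach_symm G)
      (fun {x y z} => reach_trans G) p q r'
      (reach_refl G (hdisj' p hp)) (reach_refl G (hdisj' q hq))
      (reach_refl G (hdisj' r' hr)) t1 t2 ht1T ht2T ht12
  obtain ⟨u, huT, hu⟩ := hu
  have huS : u ∉ S := hdisj' u huT
  -- Step B: every vertex outside T reaches S in G − T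
  have stepB : ∀ d, d ∉ T → ∃ s ∈ S, ReachOutside G T d s := by
    intro d hdT
    by_cases hdS : d ∈ S
    · exact ⟨d, hdS, reach_refl G hdT⟩
    by_contra hcon
    push_neg at hcon
    -- Z = component of d in G − T ; K = component of d in G − S ; X = T ∩ K
    set Z := compOutside G T d with hZdef
    set K := compOutside G S d with hKdef
    -- Z ⊆ K and Z ∩ S = ∅
    have hZK : ∀ z ∈ Z, z ∈ Z ∧ z ∈ K := by
      intro z hzZ
      refine walk_closure G (fun w => w ∈ Z ∧ w ∈ K)
        ⟨reach_refl G hdT, reach_refl G hdS⟩ ?_ hzZ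
      rintro x y ⟨hxZ, hxK⟩ hxy hyT
      have hyZ : y ∈ Z := reach_extend G hxZ hxy hyT
      have hyS : y ∉ S := fun hyS => hcon y hyS hyZ
      exact ⟨hyZ, reach_extend G hxK hxy hyS⟩
    -- some vertex of T is not in K
    have hTK : ∃ t ∈ T, t ∉ K := by
      by_contra hall
      push_neg at hall
      apply ht12
      have h1 : ReachOutside G S d t1 := hall t1 ht1T
      have h2 : ReachOutside G S d t2 := hall t2 ht2T
      exact reach_trans G (reach_symm G h1) h2
    obtain ⟨t0, ht0T, ht0K⟩ := hTK
    have hXsub : T ∩ K ⊆ T \ {t0} := by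
      rintro x ⟨hxT, hxK⟩
      exact ⟨hxT, fun hx => ht0K (hx ▸ hxK)⟩
    have hXcard : (T ∩ K).ncard ≤ 2 := by
      calc (T ∩ K).ncard ≤ (T \ {t0}).ncard := Set.ncard_le_ncard hXsub (Set.toFinite _)
        _ = T.ncard - 1 := Set.ncard_diff_singleton_of_mem ht0T
        _ = 2 := by rw [hT.1]
    -- S is nonempty; pick a witness outside Z ∪ X
    have hSne : S.Nonempty := by
      rw [← Set.ncard_pos (Set.toFinite _), hS.1]; norm_num
    obtain ⟨s0, hs0⟩ := hSne
    refine sep G htri (Z := Z) hXcard ?_ ?_ (reach_refl G hdT : d ∈ Z) (w := s0) ?_ ?_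
    · intro z hzZ hzX
      exact (reach_right_not G hzZ) hzX.1
    · intro z hzZ y hzy
      by_cases hyT : y ∈ T
      · have hzK := (hZK z hzZ).2
        have hyS : y ∉ S := hdisj' y hyT
        exact Or.inr ⟨hyT, reach_extend G hzK hzy hyS⟩
      · exact Or.inl (reach_extend G hzZ hzy hyT)
    · exact fun hs0Z => hcon s0 hs0 hs0Z
    · exact fun hs0X => (hdisj s0 hs0) hs0X.1
  -- T is a cutset, so G − T has a non-reachable pair; both sides reach S
  have hTcne : (Tᶜ : Set V).Nonempty := by
    rw [Set.nonempty_compl]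
    intro h
    have h3 : (Set.univ : Set V).ncard = 3 := h ▸ hT.1
    rw [Set.ncard_univ, Nat.card_eq_fintype_card] at h3
    have h4 := htri.1
    omega
  obtain ⟨x, hxT, y, hyT, hxy⟩ := cutset_pair G hT.2 hTcne
  obtain ⟨sx, hsxS, hsx⟩ := stepB x hxT
  obtain ⟨sy, hsyS, hsy⟩ := stepB y hyT
  have hsxy : ¬ ReachOutside G T sx sy := by
    intro h
    exact hxy (reach_trans G hsx (reach_trans G h (reach_symm G hsy)))
  -- pigeonhole on S for the relation ReachOutside G T
  obtain ⟨a, b, c, hab, hac, hbc, hSeq⟩ := Set.ncard_eq_three.mp hS.1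
  have hv : ∃ v ∈ S, ∀ s ∈ S, ReachOutside G T v s → s = v := by
    rw [hSeq] at hsxS hsyS ⊢
    have ha : a ∈ S := by rw [hSeq]; simp
    have hb : b ∈ S := by rw [hSeq]; simp
    have hc : c ∈ S := by rw [hSeq]; simp
    exact @pigeon3 V (ReachOutside G T) (fun {x y} => reach_symm G)
      (fun {x y z} => reach_trans G) a b c
      (reach_refl G (hdisj a ha)) (reach_refl G (hdisj b hb))
      (reach_refl G (hdisj c hc)) sx sy hsxS hsyS hsxy
  obtain ⟨v, hvS, hv⟩ := hv
  have hvT : v ∉ T := hdisj v hvS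
  -- the two singleton-trace equalities
  have hTC : T ∩ compOutside G S u = {u} := by
    apply Set.eq_singleton_iff_unique_mem.mpr
    exact ⟨⟨huT, reach_refl G huS⟩, fun t ⟨htT, htC⟩ => hu t htT htC⟩
  have hSD : S ∩ compOutside G T v = {v} := by
    apply Set.eq_singleton_iff_unique_mem.mpr
    exact ⟨⟨hvS, reach_refl G hvT⟩, fun s ⟨hsS, hsD⟩ => hv s hsS hsD⟩
  -- the corner C ∩ D is empty
  have hCD : compOutside G S u ∩ compOutside G T v = ∅ := by
    by_contra hne
    obtain ⟨z, hzC, hzD⟩ := Set.nonempty_iff_ne_empty.mpr hne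
    -- pick s0 ∈ S with s0 ≠ v
    have hs0 : ∃ s0 ∈ S, s0 ≠ v := by
      rw [hSeq]
      rcases eq_or_ne v a with rfl | hva
      · exact ⟨b, by simp, fun h => hab h.symm⟩
      · exact ⟨a, by simp, fun h => hva h.symm⟩
    obtain ⟨s0, hs0S, hs0v⟩ := hs0
    have hcard : ({u, v} : Set V).ncard ≤ 2 := by
      apply (Set.ncard_insert_le _ _).trans
      simp
    refine sep G htri hcard ?_ ?_
      (Set.mem_inter hzC hzD) (w := s0) ?_ ?_
    · rintro w ⟨hwC, hwD⟩ hwX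
      rcases hwX with rfl | rfl
      · exact (reach_right_not G hwD) huT
      · exact (reach_right_not G hwC) hvS
    · rintro w ⟨hwC, hwD⟩ y hwy
      by_cases hyS : y ∈ S
      · by_cases hyv : y = v
        · exact Or.inr (by simp [hyv])
        · exfalso
          exact hyv (hv y hyS (reach_extend G hwD hwy (hdisj y hyS)))
      · by_cases hyT : y ∈ T
        · have hyC : y ∈ compOutside G S u := reach_extend G hwC hwy hyS
          exact Or.inr (by simp [hu y hyT hyC])
        · exact Or.inl ⟨reach_extend G hwC hwy hyS, reach_extend G hwD hwy hyT⟩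
    · rintro ⟨hs0C, -⟩
      exact (reach_right_not G hs0C) hs0S
    · rintro (rfl | rfl)
      · exact (hdisj s0 hs0S) huT
      · exact hs0v rfl
  -- u is adjacent to v
  have hAdjD : ∃ y ∈ compOutside G T v, G.Adj u y := by
    by_contra hcon
    push_neg at hcon
    have hcard : (T \ {u}).ncard ≤ 2 := by
      rw [Set.ncard_diff_singleton_of_mem huT, hT.1]
    refine sep G htri (Z := compOutside G T v) hcard ?_ ?_ (reach_refl G hvT : v ∈ compOutside G T v)
      (w := u) ?_ ?_
    · intro z hz hzX
      exact (reach_right_not G hz) hzX.1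
    · intro z hz y hzy
      by_cases hyT : y ∈ T
      · refine Or.inr ⟨hyT, ?_⟩
        rintro rfl
        exact hcon z hz hzy.symm
      · exact Or.inl (reach_extend G hz hzy hyT)
    · intro huD
      exact (reach_right_not G huD) huT
    · simp
  obtain ⟨y0, hy0D, huy0⟩ := hAdjD
  have hy0v : y0 = v := by
    by_cases hy0S : y0 ∈ S
    · exact hv y0 hy0S hy0D
    · exfalso
      have hy0C : y0 ∈ compOutside G S u := reach_adj G huS hy0S huy0
      have : y0 ∈ compOutside G S u ∩ compOutside G T v := ⟨hy0C, hy0D⟩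
      rw [hCD] at this
      exact this
  have hAdj : G.Adj u v := hy0v ▸ huy0
  -- assemble
  refine ⟨u, ⟨huT, huS⟩, v, ⟨hvS, hvT⟩, hCD, hTC, hSD, hAdj, ?_, ?_⟩
  · rintro w hw huw
    by_cases hwS : w ∈ S
    · rcases hw with hwD | hwT
      · exact hv w hwS hwD
      · exact absurd hwT (hdisj w hwS)
    · have hwC : w ∈ compOutside G S u := reach_adj G huS hwS huw
      rcases hw with hwD | hwT
      · exfalso
        have : w ∈ compOutside G S u ∩ compOutside G T v := ⟨hwC, hwD⟩
        rw [hCD] at this; exact this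
      · exact absurd (hu w hwT hwC ▸ huw) (G.irrefl)
  · rintro w hw hvw
    by_cases hwT : w ∈ T
    · rcases hw with hwC | hwS
      · exact hu w hwT hwC
      · exact absurd hwT (hdisj w hwS)
    · have hwD : w ∈ compOutside G T v := reach_adj G hvT hwT hvw
      rcases hw with hwC | hwS
      · exfalso
        have : w ∈ compOutside G S u ∩ compOutside G T v := ⟨hwC, hwD⟩
        rw [hCD] at this; exact this
      · exact absurd (hv w hwS hwD ▸ hvw) (G.irrefl)


end Helpers

/-- Corollary 2: dependent disjoint 3-cutsets give a small part `{u, v}`. -/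
theorem stmt_1 [Fintype V] (G : SimpleGraph V)
    (htri : IsTriconnected G) (hbig : 6 < Fintype.card V)
    (S T : Set V) (hS : IsThreeCutset G S) (hT : IsThreeCutset G T)
    (hdep : Dependent G S T) (hST : S ∩ T = ∅) :
    ∃ u ∈ T \ S, ∃ v ∈ S \ T,
      compOutside G S u ∩ compOutside G T v = ∅ ∧
      T ∩ compOutside G S u = {u} ∧
      S ∩ compOutside G T v = {v} ∧
      G.Adj u v ∧
      (∀ w ∈ compOutside G T v ∪ T, G.Adj u w → w = v) ∧
      (∀ w ∈ compOutside G S u ∪ S, G.Adj v w → w = u) := by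
  rcases hdep with hsplit | hsplit
  · exact key G htri hS hT hsplit hST
  · have hST' : T ∩ S = ∅ := by rw [Set.inter_comm]; exact hST
    obtain ⟨u0, hu0, v0, hv0, h1, h2, h3, h4, h5, h6⟩ := key G htri hT hS hsplit hST'
    exact ⟨v0, hv0, u0, hu0, by rw [Set.inter_comm]; exact h1, h3, h2, h4.symm, h6, h5⟩

end Paper
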